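/- For every integer m ≥ 1, there exists a polynomial O with rational coefficients such that for all positive integers n, ∑_{k=1}^{n} k^{2m+1} = O(n(n+1)/2) · ∑_{k=1}^{n} k^3. -/

import Mathlib

open Finset Polynomial

private lemma sum_cubes (n : ℕ) :
    ∑ k ∈ Finset.Icc 1 n, (k : ℚ) ^ 3 = ((n : ℚ) * (n + 1) / 2) ^ 2 := by
  induction n with
  | zero => simp
  | succ n ih =>
    rw [Finset.sum_Icc_succ_top (by omega), ih]
    push_cast
    ring

private lemma telescope (m n : ℕ) :
    ∑ k ∈ Finset.Icc 1 n,
        (((k : ℚ) * (k + 1) / 2) ^ (m + 1) - (((k : ℚ) - 1) * k / 2) ^ (m + 1))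
      = ((n : ℚ) * (n + 1) / 2) ^ (m + 1) := by
  induction n with
  | zero => simp
  | succ n ih =>
    rw [Finset.sum_Icc_succ_top (by omega), ih]
    push_cast
    ring

private lemma step_expand (m : ℕ) (x : ℚ) :
    ((x * (x + 1) / 2) ^ (m + 1) - ((x - 1) * x / 2) ^ (m + 1)) * 2 ^ (m + 1)
      = ∑ j ∈ Finset.range (m + 2),
          (1 - (-1 : ℚ) ^ (m + 1 - j)) * ((m + 1).choose j) * x ^ (m + 1 + j) := by
  have h1 : (x + 1) ^ (m + 1)
      = ∑ j ∈ Finset.range (m + 2), x ^ j * ((m + 1).choose j : ℚ) := by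
    rw [add_pow]
    simp
  have h2 : (x - 1) ^ (m + 1)
      = ∑ j ∈ Finset.range (m + 2),
          x ^ j * (-1 : ℚ) ^ (m + 1 - j) * ((m + 1).choose j : ℚ) := by
    rw [sub_eq_add_neg, add_pow]
  have key : ((x * (x + 1) / 2) ^ (m + 1) - ((x - 1) * x / 2) ^ (m + 1)) * 2 ^ (m + 1)
      = x ^ (m + 1) * ((x + 1) ^ (m + 1) - (x - 1) ^ (m + 1)) := by
    rw [div_pow, div_pow, mul_pow, mul_pow]
    field_simp
  rw [key, h1, h2, ← Finset.sum_sub_distrib, Finset.mul_sum]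
  apply Finset.sum_congr rfl
  intro j hj
  ring

private lemma faul_main (m : ℕ) : 1 ≤ m → ∃ O : Polynomial ℚ, ∀ n : ℕ, 0 < n →
    ∑ k ∈ Finset.Icc 1 n, (k : ℚ) ^ (2 * m + 1)
      = O.eval ((n : ℚ) * (n + 1) / 2) * ((n : ℚ) * (n + 1) / 2) ^ 2 := by
  induction m using Nat.strong_induction_on with
  | _ m ih =>
  intro hm
  have ih' : ∀ k : ℕ, ∃ O : Polynomial ℚ, (k < m ∧ 1 ≤ k) → ∀ n : ℕ, 0 < n →
      ∑ j ∈ Finset.Icc 1 n, (j : ℚ) ^ (2 * k + 1)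
        = O.eval ((n : ℚ) * (n + 1) / 2) * ((n : ℚ) * (n + 1) / 2) ^ 2 := by
    intro k
    by_cases h : k < m ∧ 1 ≤ k
    · obtain ⟨O, hO⟩ := ih k h.1 h.2
      exact ⟨O, fun _ => hO⟩
    · exact ⟨0, fun hc => absurd hc h⟩
  choose f hf using ih'
  set c : ℕ → ℚ := fun j => (1 - (-1 : ℚ) ^ (m + 1 - j)) * ((m + 1).choose j) with hc
  refine ⟨Polynomial.C ((2 * ((m : ℚ) + 1))⁻¹) *
      (Polynomial.C ((2 : ℚ) ^ (m + 1)) * Polynomial.X ^ (m - 1) -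
        ∑ j ∈ (Finset.range (m + 2)).erase m, Polynomial.C (c j) * f ((m + j) / 2)), ?_⟩
  intro n hn
  set t : ℚ := (n : ℚ) * (n + 1) / 2 with ht
  -- key summed identity
  have key : (2 : ℚ) ^ (m + 1) * t ^ (m + 1)
      = ∑ j ∈ Finset.range (m + 2), c j * ∑ k ∈ Finset.Icc 1 n, (k : ℚ) ^ (m + 1 + j) := by
    rw [ht, ← telescope m n, Finset.mul_sum]
    have h1 : ∀ k ∈ Finset.Icc 1 n,
        2 ^ (m + 1) * (((k : ℚ) * (k + 1) / 2) ^ (m + 1) - (((k : ℚ) - 1) * k / 2) ^ (m + 1))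
          = ∑ j ∈ Finset.range (m + 2), c j * (k : ℚ) ^ (m + 1 + j) := by
      intro k _
      rw [mul_comm, step_expand]
    rw [Finset.sum_congr rfl h1, Finset.sum_comm]
    exact Finset.sum_congr rfl fun j _ => (Finset.mul_sum _ _ _).symm
  have hsplit : Finset.range (m + 2) = insert m ((Finset.range (m + 2)).erase m) :=
    (Finset.insert_erase (Finset.mem_range.mpr (by omega))).symm
  rw [hsplit, Finset.sum_insert (Finset.notMem_erase _ _)] at key
  have hcm : c m = 2 * ((m : ℚ) + 1) := by
    have h1 : m + 1 - m = 1 := by omega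
    simp only [hc]
    rw [h1, Nat.choose_succ_self_right]
    push_cast
    ring
  have hmm : m + 1 + m = 2 * m + 1 := by omega
  rw [hcm, hmm] at key
  have herase : ∀ j ∈ (Finset.range (m + 2)).erase m,
      c j * ∑ k ∈ Finset.Icc 1 n, (k : ℚ) ^ (m + 1 + j)
        = c j * ((f ((m + j) / 2)).eval t * t ^ 2) := by
    intro j hj
    by_cases h0 : c j = 0
    · rw [h0]; ring
    · have hj1 : j ≠ m := Finset.ne_of_mem_erase hj
      have hj2 : j < m + 2 := Finset.mem_range.mp (Finset.mem_of_mem_erase hj)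
      have hodd : ¬ Even (m + 1 - j) := by
        intro he
        exact h0 (by simp [hc, Even.neg_one_pow he])
      rw [Nat.not_even_iff_odd] at hodd
      obtain ⟨r, hr⟩ := hodd
      have e1 : m + 1 + j = 2 * ((m + j) / 2) + 1 := by omega
      have e2 : (m + j) / 2 < m ∧ 1 ≤ (m + j) / 2 := by omega
      rw [e1, hf ((m + j) / 2) ⟨e2.1, e2.2⟩ n hn, ← ht]
  rw [Finset.sum_congr rfl herase] at key
  have hA : ∑ j ∈ (Finset.range (m + 2)).erase m, c j * ((f ((m + j) / 2)).eval t * t ^ 2)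
      = (∑ j ∈ (Finset.range (m + 2)).erase m, c j * (f ((m + j) / 2)).eval t) * t ^ 2 := by
    rw [Finset.sum_mul]
    exact Finset.sum_congr rfl fun j _ => by ring
  rw [hA] at key
  have e3 : t ^ (m - 1) * t ^ 2 = t ^ (m + 1) := by
    rw [← pow_add]
    congr 1
    omega
  have hne : (2 * ((m : ℚ) + 1)) ≠ 0 := by positivity
  simp only [Polynomial.eval_mul, Polynomial.eval_sub, Polynomial.eval_C, Polynomial.eval_pow,
    Polynomial.eval_X, Polynomial.eval_finset_sum]
  rw [inv_mul_eq_div, div_mul_eq_mul_div, eq_div_iff hne]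
  linear_combination -key - 2 ^ (m + 1) * e3

theorem stmt_14 (m : ℕ) (hm : 1 ≤ m) :
    ∃ O : Polynomial ℚ, ∀ n : ℕ, 0 < n →
      ∑ k ∈ Finset.Icc 1 n, (k : ℚ) ^ (2 * m + 1) =
        O.eval ((n : ℚ) * (n + 1) / 2) * ∑ k ∈ Finset.Icc 1 n, (k : ℚ) ^ 3 := by
  obtain ⟨O, hO⟩ := faul_main m hm
  exact ⟨O, fun n hn => by rw [sum_cubes, hO n hn]⟩
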